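/- The formal power series F_2(q) = Σ_{j≥0} q^{2j} (q;q)_j is of Bloch–Pólya type, i.e., all of its coefficients lie in {-1, 0, 1}. -/

import Mathlib

/-- The finite q-Pochhammer symbol `(q;q)_m = ∏_{i=1}^{m} (1 - q^i)` as a polynomial in `ℤ[q]`. -/
noncomputable def qPoch (m : ℕ) : Polynomial ℤ :=
  ∏ i ∈ Finset.range m, (1 - Polynomial.X ^ (i + 1))

/-- The infinite product `(q^a;q)_∞ = ∏_{i ≥ 0} (1 - q^{a+i})` in `ℤ[[q]]` (for `a ≥ 1`),
defined coefficientwise via sufficiently large partial products.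
In particular, `pochInf 1 = (q;q)_∞`. -/
noncomputable def pochInf (a : ℕ) : PowerSeries ℤ :=
  PowerSeries.mk fun n =>
    (∏ i ∈ Finset.range (n + 1), (1 - Polynomial.X ^ (a + i)) : Polynomial ℤ).coeff n

/-- The formal power series `F_k(q) = Σ_{j ≥ 0} q^{kj} (q;q)_j ∈ ℤ[[q]]` (for `k ≥ 1`),
defined coefficientwise: the term with index `j` is divisible by `q^{kj}`,
so only terms with `j ≤ n` contribute to the coefficient of `q^n`. -/
noncomputable def Fser (k : ℕ) : PowerSeries ℤ :=
  PowerSeries.mk fun n =>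
    (∑ j ∈ Finset.range (n + 1), Polynomial.X ^ (k * j) * qPoch j : Polynomial ℤ).coeff n


open Polynomial Finset

noncomputable def pgen (a m : ℕ) : Polynomial ℤ :=
  ∏ i ∈ Finset.range m, (1 - Polynomial.X ^ (a + i))

noncomputable def Spoly (a b M : ℕ) : Polynomial ℤ :=
  ∑ j ∈ Finset.range M, Polynomial.X ^ (b * j) * pgen a j

noncomputable def Xser (a b : ℕ) : PowerSeries ℤ :=
  PowerSeries.mk fun n => (Spoly a b (n + 1)).coeff n

lemma pgen_succ (a m : ℕ) : pgen a (m + 1) = pgen a m * (1 - Polynomial.X ^ (a + m)) := by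
  rw [pgen, Finset.prod_range_succ, pgen]

lemma pgen_succ' (a m : ℕ) :
    pgen a (m + 1) = (1 - Polynomial.X ^ a) * pgen (a + 1) m := by
  rw [pgen, Finset.prod_range_succ', pgen, mul_comm]
  congr 1
  · refine Finset.prod_congr rfl fun i _ => ?_
    rw [show a + (i + 1) = a + 1 + i by omega]

lemma SpolyL1 (a b M : ℕ) :
    Spoly a b (M + 1) = 1 + (Polynomial.X ^ b - Polynomial.X ^ (a + b)) * Spoly (a + 1) b M := by
  rw [Spoly, Finset.sum_range_succ', Spoly, Finset.mul_sum]
  rw [mul_zero, pow_zero, one_mul]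
  rw [show pgen a 0 = 1 from rfl, add_comm]
  congr 1
  refine Finset.sum_congr rfl fun j _ => ?_
  rw [pgen_succ', show b * (j + 1) = b * j + b by ring]
  ring

lemma SpolyL2 (a b M : ℕ) :
    (1 - Polynomial.X ^ b) * Spoly a b (M + 1)
      = 1 - Polynomial.X ^ (a + b) * Spoly a (b + 1) M
        - Polynomial.X ^ (b * (M + 1)) * pgen a M := by
  have h1 : Spoly a b (M + 1)
      = 1 + ∑ j ∈ Finset.range M, Polynomial.X ^ (b * (j + 1)) * pgen a (j + 1) := by
    rw [Spoly, Finset.sum_range_succ', mul_zero, pow_zero, one_mul,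
      show pgen a 0 = 1 from rfl, add_comm]
  have h2 : Polynomial.X ^ b * Spoly a b (M + 1)
      = (∑ j ∈ Finset.range M, Polynomial.X ^ (b * j + b) * pgen a j)
        + Polynomial.X ^ (b * (M + 1)) * pgen a M := by
    rw [Spoly, Finset.mul_sum, Finset.sum_range_succ]
    congr 1
    · exact Finset.sum_congr rfl fun j _ => by rw [pow_add]; ring
    · rw [show b * (M + 1) = b * M + b by ring, pow_add]; ring
  have h3 : ∀ j : ℕ, Polynomial.X ^ (b * (j + 1)) * pgen a (j + 1)
      - Polynomial.X ^ (b * j + b) * pgen a j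
      = -(Polynomial.X ^ (a + b) * (Polynomial.X ^ ((b + 1) * j) * pgen a j)) := by
    intro j
    rw [pgen_succ, show b * (j + 1) = b * j + b by ring]
    ring
  calc (1 - Polynomial.X ^ b) * Spoly a b (M + 1)
      = Spoly a b (M + 1) - Polynomial.X ^ b * Spoly a b (M + 1) := by ring
    _ = 1 + (∑ j ∈ Finset.range M, (Polynomial.X ^ (b * (j + 1)) * pgen a (j + 1)
          - Polynomial.X ^ (b * j + b) * pgen a j))
          - Polynomial.X ^ (b * (M + 1)) * pgen a M := by
        rw [h2, h1, Finset.sum_sub_distrib]; ring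
    _ = 1 + (∑ j ∈ Finset.range M,
          -(Polynomial.X ^ (a + b) * (Polynomial.X ^ ((b + 1) * j) * pgen a j)))
          - Polynomial.X ^ (b * (M + 1)) * pgen a M := by
        rw [Finset.sum_congr rfl fun j _ => h3 j]
    _ = 1 - Polynomial.X ^ (a + b) * Spoly a (b + 1) M
          - Polynomial.X ^ (b * (M + 1)) * pgen a M := by
        rw [Finset.sum_neg_distrib, ← Finset.mul_sum, Spoly]; ring
lemma coeff_Xser (a b n : ℕ) :
    PowerSeries.coeff n (Xser a b) = (Spoly a b (n + 1)).coeff n := by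
  rw [Xser, PowerSeries.coeff_mk]

lemma coeff_Xser_eq {b : ℕ} (hb : 1 ≤ b) (a n M : ℕ) (h : n < M) :
    PowerSeries.coeff n (Xser a b) = (Spoly a b M).coeff n := by
  rw [coeff_Xser, Spoly, Spoly, Polynomial.finset_sum_coeff, Polynomial.finset_sum_coeff]
  refine Finset.sum_subset (Finset.range_subset_range.mpr h) fun j _ hj => ?_
  rw [Finset.mem_range, not_lt] at hj
  rw [Polynomial.coeff_X_pow_mul', if_neg]
  have : j ≤ b * j := Nat.le_mul_of_pos_left j (by omega)
  omega

lemma psL1 {b : ℕ} (hb : 1 ≤ b) (a : ℕ) :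
    Xser a b = 1 + (PowerSeries.X ^ b - PowerSeries.X ^ (a + b)) * Xser (a + 1) b := by
  ext n
  have hR : (PowerSeries.coeff n)
        (1 + (PowerSeries.X ^ b - PowerSeries.X ^ (a + b)) * Xser (a + 1) b)
      = (if n = 0 then 1 else 0)
        + ((if b ≤ n then (PowerSeries.coeff (n - b)) (Xser (a+1) b) else 0)
          - (if a + b ≤ n then (PowerSeries.coeff (n - (a+b))) (Xser (a+1) b) else 0)) := by
    rw [map_add, PowerSeries.coeff_one, sub_mul, map_sub,
      PowerSeries.coeff_X_pow_mul', PowerSeries.coeff_X_pow_mul']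
  have hL : ((1 : Polynomial ℤ) + (Polynomial.X ^ b - Polynomial.X ^ (a + b))
        * Spoly (a+1) b n).coeff n
      = (if n = 0 then 1 else 0)
        + ((if b ≤ n then (Spoly (a+1) b n).coeff (n - b) else 0)
          - (if a + b ≤ n then (Spoly (a+1) b n).coeff (n - (a+b)) else 0)) := by
    rw [Polynomial.coeff_add, Polynomial.coeff_one, sub_mul, Polynomial.coeff_sub,
      Polynomial.coeff_X_pow_mul', Polynomial.coeff_X_pow_mul']
  rw [coeff_Xser, SpolyL1 a b n, hL, hR]
  congr 1
  congr 1
  · split_ifs with h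
    · rw [coeff_Xser_eq hb (a+1) (n-b) n (by omega)]
    · rfl
  · split_ifs with h
    · rw [coeff_Xser_eq hb (a+1) (n-(a+b)) n (by omega)]
    · rfl

lemma psL2 {b : ℕ} (hb : 1 ≤ b) (a : ℕ) :
    (1 - PowerSeries.X ^ b) * Xser a b
      = 1 - PowerSeries.X ^ (a + b) * Xser a (b + 1) := by
  ext n
  have lhs : (PowerSeries.coeff n) ((1 - PowerSeries.X ^ b) * Xser a b)
      = ((1 - Polynomial.X ^ b) * Spoly a b (n + 1)).coeff n := by
    rw [sub_mul, one_mul, sub_mul, one_mul, map_sub, Polynomial.coeff_sub,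
      PowerSeries.coeff_X_pow_mul', Polynomial.coeff_X_pow_mul', coeff_Xser]
    congr 1
    split_ifs with h
    · rw [coeff_Xser_eq hb a (n-b) (n+1) (by omega)]
    · rfl
  rw [lhs, SpolyL2 a b n]
  have hbig : ¬ b * (n + 1) ≤ n := by
    have : n + 1 ≤ b * (n + 1) := Nat.le_mul_of_pos_left _ (by omega)
    omega
  rw [Polynomial.coeff_sub, Polynomial.coeff_sub, Polynomial.coeff_one,
    Polynomial.coeff_X_pow_mul', Polynomial.coeff_X_pow_mul',
    map_sub, PowerSeries.coeff_one, PowerSeries.coeff_X_pow_mul']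
  rw [if_neg hbig, sub_zero]
  congr 1
  split_ifs with h
  · rw [coeff_Xser_eq (by omega : 1 ≤ b + 1) a (n-(a+b)) n (by omega)]
  · rfl

lemma psL3 {a : ℕ} (ha : 1 ≤ a) :
    Xser a a = 1 + PowerSeries.X ^ a
      - PowerSeries.X ^ (3 * a + 1) * Xser (a + 1) (a + 1) := by
  have h1 := psL1 ha a
  have h2 := psL2 ha (a + 1)
  have e1 : (PowerSeries.X : PowerSeries ℤ) ^ (a + a) = PowerSeries.X ^ a * PowerSeries.X ^ a :=
    pow_add _ _ _
  have e2 : (PowerSeries.X : PowerSeries ℤ) ^ (a + 1 + a)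
      = PowerSeries.X ^ (a + 1) * PowerSeries.X ^ a := pow_add _ _ _
  have e3 : (PowerSeries.X : PowerSeries ℤ) ^ (3 * a + 1)
      = PowerSeries.X ^ a * (PowerSeries.X ^ (a + 1) * PowerSeries.X ^ a) := by
    rw [← pow_add, ← pow_add]; congr 1; omega
  rw [e1] at h1
  rw [e2] at h2
  rw [e3]
  linear_combination h1 + (PowerSeries.X : PowerSeries ℤ) ^ a * h2
def yterm (a n m : ℕ) : ℤ :=
  (-1) ^ m * ((if 2 * n = m * (6 * a + 3 * m - 1) then 1 else 0)
    + (if 2 * n = m * (6 * a + 3 * m - 1) + 2 * (a + m) then 1 else 0))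

def yhat (a n : ℕ) : ℤ := ∑ m ∈ Finset.range (n + 1), yterm a n m

lemma yterm_zero (a n : ℕ) :
    yterm a n 0 = (if n = 0 then 1 else 0) + (if n = a then 1 else 0) := by
  rw [yterm]
  simp only [pow_zero, one_mul, Nat.zero_mul, Nat.zero_add]
  congr 1
  · exact if_congr (by omega) rfl rfl
  · exact if_congr (by omega) rfl rfl

lemma yterm_big {a n m : ℕ} (h : n < m) : yterm a n m = 0 := by
  have h1 : 2 * n < m * (6 * a + 3 * m - 1) := by
    have : m * 2 ≤ m * (6 * a + 3 * m - 1) := Nat.mul_le_mul_left m (by omega)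
    omega
  rw [yterm, if_neg (by omega), if_neg (by omega), add_zero, mul_zero]

lemma yterm_shift {a n m : ℕ} (hn : 3 * a + 1 ≤ n) :
    yterm a n (m + 1) = -(yterm (a + 1) (n - (3 * a + 1)) m) := by
  have e1 : (m + 1) * (6 * a + 3 * (m + 1) - 1)
      = m * (6 * (a + 1) + 3 * m - 1) + (6 * a + 2) := by
    rw [show 6 * a + 3 * (m + 1) - 1 = 6 * a + 3 * m + 2 by omega,
      show 6 * (a + 1) + 3 * m - 1 = 6 * a + 3 * m + 5 by omega]
    ring
  have key : ∀ K : ℕ, (2 * n = K + (6 * a + 2)) ↔ (2 * (n - (3 * a + 1)) = K) := by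
    intro K; omega
  rw [yterm, yterm, e1, pow_succ]
  have c1 : (if 2 * n = m * (6 * (a + 1) + 3 * m - 1) + (6 * a + 2) then (1:ℤ) else 0)
      = (if 2 * (n - (3 * a + 1)) = m * (6 * (a + 1) + 3 * m - 1) then 1 else 0) :=
    if_congr (key _) rfl rfl
  have c2 : (if 2 * n = m * (6 * (a + 1) + 3 * m - 1) + (6 * a + 2) + 2 * (a + (m + 1))
        then (1:ℤ) else 0)
      = (if 2 * (n - (3 * a + 1)) = m * (6 * (a + 1) + 3 * m - 1) + 2 * (a + 1 + m)
        then 1 else 0) := by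
    refine if_congr ?_ rfl rfl
    rw [show m * (6 * (a + 1) + 3 * m - 1) + (6 * a + 2) + 2 * (a + (m + 1))
      = (m * (6 * (a + 1) + 3 * m - 1) + 2 * (a + 1 + m)) + (6 * a + 2) by ring]
    exact key _
  rw [c1, c2]
  ring

lemma yhat_rec (a n : ℕ) :
    yhat a n = ((if n = 0 then 1 else 0) + (if n = a then 1 else 0))
      - (if 3 * a + 1 ≤ n then yhat (a + 1) (n - (3 * a + 1)) else 0) := by
  rw [yhat, Finset.sum_range_succ', yterm_zero]
  by_cases hn : 3 * a + 1 ≤ n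
  · rw [if_pos hn]
    have hsum : ∑ m ∈ Finset.range n, yterm a n (m + 1)
        = -(∑ m ∈ Finset.range n, yterm (a + 1) (n - (3 * a + 1)) m) := by
      rw [← Finset.sum_neg_distrib]
      exact Finset.sum_congr rfl fun m _ => by rw [yterm_shift hn]
    have hpad : ∑ m ∈ Finset.range (n - (3 * a + 1) + 1), yterm (a + 1) (n - (3 * a + 1)) m
        = ∑ m ∈ Finset.range n, yterm (a + 1) (n - (3 * a + 1)) m := by
      refine Finset.sum_subset (Finset.range_subset_range.mpr (by omega)) fun m _ hm => ?_
      rw [Finset.mem_range, not_lt] at hm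
      exact yterm_big (by omega)
    rw [hsum, yhat, hpad]
    ring
  · rw [if_neg hn]
    have hz : ∑ m ∈ Finset.range n, yterm a n (m + 1) = 0 :=
      Finset.sum_eq_zero fun m _ => by
        have h1 : 2 * n < (m + 1) * (6 * a + 3 * (m + 1) - 1) := by
          have : (m + 1) * (6 * a + 2) ≤ (m + 1) * (6 * a + 3 * (m + 1) - 1) :=
            Nat.mul_le_mul_left (m + 1) (by omega)
          have : 6 * a + 2 ≤ (m + 1) * (6 * a + 2) := Nat.le_mul_of_pos_left _ (by omega)
          omega
        rw [yterm, if_neg (by omega), if_neg (by omega), add_zero, mul_zero]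
    rw [hz]
    ring

lemma coeff_Xser_diag : ∀ n : ℕ, ∀ a : ℕ, 1 ≤ a →
    PowerSeries.coeff n (Xser a a) = yhat a n := by
  intro n
  induction n using Nat.strong_induction_on with
  | _ n ih =>
    intro a ha
    rw [psL3 ha, map_sub, map_add, PowerSeries.coeff_one, PowerSeries.coeff_X_pow,
      PowerSeries.coeff_X_pow_mul']
    rw [yhat_rec a n]
    congr 1
    split_ifs with h
    · exact ih (n - (3 * a + 1)) (by omega) (a + 1) (by omega)
    · rfl
lemma mono5 {x y : ℕ} (h : x ≤ y) : x * (3 * x + 5) ≤ y * (3 * y + 5) :=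
  Nat.mul_le_mul h (by omega)

lemma mono7 {x y : ℕ} (h : x ≤ y) : x * (3 * x + 7) ≤ y * (3 * y + 7) :=
  Nat.mul_le_mul h (by omega)

lemma inj5 {x y : ℕ} (h : x * (3 * x + 5) = y * (3 * y + 5)) : x = y := by
  rcases lt_trichotomy x y with hl | he | hl
  · have h1 := mono5 (show x + 1 ≤ y by omega)
    have h2 : (x + 1) * (3 * (x + 1) + 5) = x * (3 * x + 5) + (6 * x + 8) := by ring
    linarith
  · exact he
  · have h1 := mono5 (show y + 1 ≤ x by omega)
    have h2 : (y + 1) * (3 * (y + 1) + 5) = y * (3 * y + 5) + (6 * y + 8) := by ring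
    linarith

lemma inj7 {x y : ℕ} (h : x * (3 * x + 7) = y * (3 * y + 7)) : x = y := by
  rcases lt_trichotomy x y with hl | he | hl
  · have h1 := mono7 (show x + 1 ≤ y by omega)
    have h2 : (x + 1) * (3 * (x + 1) + 7) = x * (3 * x + 7) + (6 * x + 10) := by ring
    linarith
  · exact he
  · have h1 := mono7 (show y + 1 ≤ x by omega)
    have h2 : (y + 1) * (3 * (y + 1) + 7) = y * (3 * y + 7) + (6 * y + 10) := by ring
    linarith

lemma ne57 {x y : ℕ} (h : x * (3 * x + 5) = y * (3 * y + 7) + 2) : False := by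
  rcases le_or_gt x y with hxy | hxy
  · have h1 := mono5 hxy
    have h2 : y * (3 * y + 7) = y * (3 * y + 5) + 2 * y := by ring
    linarith
  · have h1 := mono5 (show y + 1 ≤ x by omega)
    have h2 : (y + 1) * (3 * (y + 1) + 5) = y * (3 * y + 7) + (4 * y + 8) := by ring
    linarith

lemma gapFF {x y : ℕ} (h : x * (3 * x + 5) + 2 = y * (3 * y + 5)) : False := by
  rcases le_or_gt y x with hxy | hxy
  · have h1 := mono5 hxy
    linarith
  · have h1 := mono5 (show x + 1 ≤ y by omega)
    have h2 : (x + 1) * (3 * (x + 1) + 5) = x * (3 * x + 5) + (6 * x + 8) := by ring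
    linarith

lemma zero57 {x y : ℕ} (h : x * (3 * x + 5) = y * (3 * y + 7)) : x = 0 := by
  rcases le_or_gt x y with hxy | hxy
  · have h1 := mono7 hxy
    have h2 : x * (3 * x + 7) = x * (3 * x + 5) + 2 * x := by ring
    omega
  · exfalso
    have h1 := mono5 (show y + 1 ≤ x by omega)
    have h2 : (y + 1) * (3 * (y + 1) + 5) = y * (3 * y + 7) + (4 * y + 8) := by ring
    linarith

lemma gapGF {x y : ℕ} (h : x * (3 * x + 7) + 4 = y * (3 * y + 5)) : False := by
  rcases le_or_gt y x with hxy | hxy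
  · have h1 := mono5 hxy
    have h2 : x * (3 * x + 7) = x * (3 * x + 5) + 2 * x := by ring
    linarith
  · have h1 := mono5 (show x + 1 ≤ y by omega)
    have h2 : (x + 1) * (3 * (x + 1) + 5) = x * (3 * x + 7) + (4 * x + 8) := by ring
    linarith

lemma gapGG {x y : ℕ} (h : x * (3 * x + 7) + 2 = y * (3 * y + 7)) : False := by
  rcases le_or_gt y x with hxy | hxy
  · have h1 := mono7 hxy
    linarith
  · have h1 := mono7 (show x + 1 ≤ y by omega)
    have h2 : (x + 1) * (3 * (x + 1) + 7) = x * (3 * x + 7) + (6 * x + 10) := by ring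
    linarith

lemma yterm_fired {k m : ℕ} (h : yterm 1 k m ≠ 0) :
    2 * k = m * (3 * m + 5) ∨ 2 * k = m * (3 * m + 7) + 2 := by
  by_contra hc
  push_neg at hc
  apply h
  rw [yterm, show 6 * 1 + 3 * m - 1 = 3 * m + 5 by omega,
    show m * (3 * m + 5) + 2 * (1 + m) = m * (3 * m + 7) + 2 by ring,
    if_neg hc.1, if_neg hc.2]
  simp

lemma yterm_mem (k m : ℕ) : yterm 1 k m ∈ ({-1, 0, 1} : Set ℤ) := by
  rw [yterm]
  have hpow : (-1 : ℤ) ^ m = 1 ∨ (-1 : ℤ) ^ m = -1 := by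
    rcases Nat.even_or_odd m with he | ho
    · exact Or.inl he.neg_one_pow
    · exact Or.inr ho.neg_one_pow
  have hne : ¬ (2 * k = m * (6 * 1 + 3 * m - 1)
      ∧ 2 * k = m * (6 * 1 + 3 * m - 1) + 2 * (1 + m)) := by
    rintro ⟨h1, h2⟩
    linarith
  simp only [Set.mem_insert_iff, Set.mem_singleton_iff]
  split_ifs with h1 h2 h2
  · exact absurd ⟨h1, h2⟩ hne
  · rcases hpow with hp | hp <;> rw [hp] <;> norm_num
  · rcases hpow with hp | hp <;> rw [hp] <;> norm_num
  · norm_num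

lemma yterm_unique {k m m' : ℕ} (h : yterm 1 k m ≠ 0) (h' : yterm 1 k m' ≠ 0) : m = m' := by
  rcases yterm_fired h with h1 | h1 <;> rcases yterm_fired h' with h2 | h2
  · exact inj5 (h1.symm.trans h2)
  · exact absurd (h1.symm.trans h2) fun hh => ne57 hh
  · exact absurd (h2.symm.trans h1) fun hh => ne57 hh
  · exact inj7 (Nat.add_right_cancel (h1.symm.trans h2))

lemma yhat_mem (k : ℕ) : yhat 1 k ∈ ({-1, 0, 1} : Set ℤ) := by
  rw [yhat]
  by_cases hz : ∀ m ∈ Finset.range (k + 1), yterm 1 k m = 0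
  · rw [Finset.sum_eq_zero hz]; simp
  · push_neg at hz
    obtain ⟨m₀, hm₀, hne⟩ := hz
    rw [Finset.sum_eq_single_of_mem m₀ hm₀ fun b hb hbne => ?_]
    · exact yterm_mem k m₀
    · by_contra hb0
      exact hbne (yterm_unique hb0 hne)

lemma yhat_support {k : ℕ} (h : yhat 1 k ≠ 0) :
    ∃ m, 2 * k = m * (3 * m + 5) ∨ 2 * k = m * (3 * m + 7) + 2 := by
  rw [yhat] at h
  obtain ⟨m, _, hm⟩ := Finset.exists_ne_zero_of_sum_ne_zero h
  exact ⟨m, yterm_fired hm⟩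

lemma key_gap {n : ℕ} (h1 : yhat 1 (n + 1) ≠ 0) (h2 : yhat 1 (n + 2) ≠ 0) : False := by
  obtain ⟨x, hx⟩ := yhat_support h1
  obtain ⟨y, hy⟩ := yhat_support h2
  rcases hx with hx | hx <;> rcases hy with hy | hy
  · exact gapFF (x := x) (y := y) (by linarith)
  · have h0 : x * (3 * x + 5) = y * (3 * y + 7) := by linarith
    have := zero57 h0
    subst this
    omega
  · exact gapGF (x := x) (y := y) (by linarith)
  · exact gapGG (x := x) (y := y) (by linarith)
lemma qPoch_eq (m : ℕ) : qPoch m = pgen 1 m := by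
  rw [qPoch, pgen]
  exact Finset.prod_congr rfl fun i _ => by rw [add_comm]

lemma Fser_eq (k : ℕ) : Fser k = Xser 1 k := by
  ext n
  rw [Fser, PowerSeries.coeff_mk, coeff_Xser, Spoly]
  congr 1
  exact Finset.sum_congr rfl fun j _ => by rw [qPoch_eq]

theorem F2_blochPolya :
    ∀ n : ℕ, PowerSeries.coeff n (Fser 2) ∈ ({-1, 0, 1} : Set ℤ) := by
  intro n
  have h := psL2 (le_refl 1) 1
  have hc := congrArg (PowerSeries.coeff (n + 2)) h
  rw [sub_mul, one_mul, map_sub, map_sub, PowerSeries.coeff_one,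
    PowerSeries.coeff_X_pow_mul', PowerSeries.coeff_X_pow_mul'] at hc
  rw [if_pos (by omega : 1 ≤ n + 2), if_pos (by omega : 1 + 1 ≤ n + 2),
    if_neg (by omega : ¬ n + 2 = 0)] at hc
  rw [show n + 2 - 1 = n + 1 by omega, show n + 2 - (1 + 1) = n by omega] at hc
  rw [coeff_Xser_diag (n + 2) 1 le_rfl, coeff_Xser_diag (n + 1) 1 le_rfl, zero_sub] at hc
  have hval : PowerSeries.coeff n (Fser 2) = yhat 1 (n + 1) - yhat 1 (n + 2) := by
    rw [Fser_eq 2]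
    linarith [hc]
  have m1 := yhat_mem (n + 1)
  have m2 := yhat_mem (n + 2)
  have hor : yhat 1 (n + 1) = 0 ∨ yhat 1 (n + 2) = 0 := by
    by_contra hcon
    push_neg at hcon
    exact key_gap hcon.1 hcon.2
  simp only [Set.mem_insert_iff, Set.mem_singleton_iff] at m1 m2 ⊢
  rw [hval]
  rcases hor with h0 | h0 <;> omega
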